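/- Let φ be a positive CNF formula over variables X_1,…,X_m with nonempty clauses D_1,…,D_ℓ ⊆ {1,…,m}, and let k ≥ 1. Define the matrix M ∈ {0,1}^{(ℓ+k)×m} whose rows 1,…,k−1 are all-zero, whose row k−1+i is the incidence row of clause D_i for 1 ≤ i ≤ ℓ, and whose row ℓ+k is all-zero. Then for every set of columns C ⊆ {1,…,m} and for each of the three rankings (sum, max, lex) of the rows of M restricted to C, the rank of row ℓ+k is at most k if and only if the assignment α_C models φ (i.e., C ∩ D_i ≠ ∅ for every i ∈ {1,…,ℓ}). -/

import Mathlib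

open Finset

/-- The rank of row `i` under keys `key` in ascending order with index tie-breaking:
`rank(i) = #{j : key j < key i} + #{j : key j = key i ∧ j ≤ i}` (ranks are `1, …, n`). -/
def rankOf {n : ℕ} {K : Type*} [LinearOrder K] (key : Fin n → K) (i : Fin n) : ℕ :=
  (Finset.univ.filter (fun j => key j < key i)).card +
    (Finset.univ.filter (fun j => key j = key i ∧ j ≤ i)).card

lemma lex_aux : ∀ {l l0 : List ℕ}, (∀ x ∈ l0, x = 0) → l.length = l0.length →
    ¬ List.Lex (· < ·) l l0 := by
  intro l l0 h hlen hlex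
  induction hlex with
  | nil => simp at hlen
  | @rel a l1 b l2 hab =>
      have : b = 0 := h b (by simp)
      omega
  | @cons a l1 l2 _ ih =>
      exact ih (fun x hx => h x (by simp [hx])) (by simpa using hlen)

lemma zero_le_list {l l0 : List ℕ} (h : ∀ x ∈ l0, x = 0) (hlen : l.length = l0.length) :
    l0 ≤ l := by
  refine le_of_not_gt fun hlt => ?_
  exact lex_aux h hlen hlt

lemma nat_sup_eq_zero {β : Type*} (s : Finset β) (f : β → ℕ) :
    s.sup f = 0 ↔ ∀ j ∈ s, f j = 0 := by
  simpa using Finset.sup_eq_bot_iff f s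

lemma rank_aux (ℓ m k : ℕ) (hk : 1 ≤ k) (D : Fin ℓ → Finset (Fin m))
    (C : Finset (Fin m)) {K : Type*} [LinearOrder K] (key : Fin (ℓ + k) → K)
    (hmin : ∀ r, key ⟨ℓ + k - 1, Nat.sub_lt (by omega) Nat.one_pos⟩ ≤ key r)
    (hzero : ∀ r : Fin (ℓ + k), (r : ℕ) < k - 1 → key r = key ⟨ℓ + k - 1, Nat.sub_lt (by omega) Nat.one_pos⟩)
    (hclause : ∀ i : Fin ℓ,
      (key ⟨k - 1 + (i : ℕ), Nat.lt_of_lt_of_le (Nat.add_lt_add_left i.isLt _) (by omega)⟩ = key ⟨ℓ + k - 1, Nat.sub_lt (by omega) Nat.one_pos⟩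
        ↔ (C ∩ D i) = ∅)) :
    rankOf key ⟨ℓ + k - 1, Nat.sub_lt (by omega) Nat.one_pos⟩ ≤ k ↔ ∀ i : Fin ℓ, (C ∩ D i).Nonempty := by
  set r0 : Fin (ℓ + k) := ⟨ℓ + k - 1, Nat.sub_lt (by omega) Nat.one_pos⟩ with hr0
  have h1 : (Finset.univ.filter (fun j => key j < key r0)) = ∅ := by
    apply Finset.filter_eq_empty_iff.mpr
    intro j _
    exact not_lt.mpr (hmin j)
  have h2 : (Finset.univ.filter (fun j => key j = key r0 ∧ j ≤ r0))
      = Finset.univ.filter (fun j => key j = key r0) := by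
    apply Finset.filter_congr
    intro j _
    have : j ≤ r0 := by
      have := j.isLt
      exact Fin.le_def.mpr (by simp [hr0]; omega)
    simp [this]
  have hrank : rankOf key r0 = (Finset.univ.filter (fun j => key j = key r0)).card := by
    rw [rankOf, h1, h2]; simp
  set S := Finset.univ.filter (fun j : Fin (ℓ + k) => key j = key r0) with hS
  set Z := Finset.univ.filter (fun j : Fin (ℓ + k) => (j : ℕ) < k - 1 ∨ (j : ℕ) = ℓ + k - 1)
    with hZ
  have hZS : Z ⊆ S := by
    intro j hj
    simp only [hZ, Finset.mem_filter, Finset.mem_univ, true_and] at hj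
    simp only [hS, Finset.mem_filter, Finset.mem_univ, true_and]
    rcases hj with h | h
    · exact hzero j h
    · congr 1
      exact Fin.ext h
  have hZcard : Z.card = k := by
    have himg : Z.image (Fin.val) = Finset.range (k - 1) ∪ {ℓ + k - 1} := by
      ext j
      simp only [hZ, Finset.mem_image, Finset.mem_filter, Finset.mem_univ, true_and,
        Finset.mem_union, Finset.mem_range, Finset.mem_singleton]
      constructor
      · rintro ⟨a, ha, rfl⟩; exact ha
      · intro h; exact ⟨⟨j, by omega⟩, by simpa using h, rfl⟩
    have : Z.card = (Z.image (Fin.val)).card :=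
      (Finset.card_image_of_injective Z Fin.val_injective).symm
    rw [this, himg, Finset.card_union_of_disjoint (by simp; omega)]
    simp; omega
  rw [hrank]
  constructor
  · intro hle i
    by_contra hne
    rw [Finset.not_nonempty_iff_eq_empty] at hne
    set ri : Fin (ℓ + k) := ⟨k - 1 + (i : ℕ), Nat.lt_of_lt_of_le (Nat.add_lt_add_left i.isLt _) (by omega)⟩ with hri
    have hriS : ri ∈ S := by
      simp only [hS, Finset.mem_filter, Finset.mem_univ, true_and]
      exact (hclause i).mpr hne
    have hriZ : ri ∉ Z := by
      simp only [hZ, Finset.mem_filter, Finset.mem_univ, true_and, hri]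
      have := i.isLt
      simp; omega
    have : Z.card + 1 ≤ S.card := by
      have : insert ri Z ⊆ S := Finset.insert_subset hriS hZS
      calc Z.card + 1 = (insert ri Z).card := (Finset.card_insert_of_notMem hriZ).symm
        _ ≤ S.card := Finset.card_le_card this
    omega
  · intro hall
    have hSZ : S ⊆ Z := by
      intro j hj
      simp only [hS, Finset.mem_filter, Finset.mem_univ, true_and] at hj
      simp only [hZ, Finset.mem_filter, Finset.mem_univ, true_and]
      by_contra hjZ
      push_neg at hjZ
      obtain ⟨h1', h2'⟩ := hjZ
      have hjlt := j.isLt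
      set i : Fin ℓ := ⟨(j : ℕ) - (k - 1), by omega⟩ with hi
      have hji : j = ⟨k - 1 + (i : ℕ), Nat.lt_of_lt_of_le (Nat.add_lt_add_left i.isLt _) (by omega)⟩ := by
        apply Fin.ext; simp [hi]; omega
      rw [hji] at hj
      have := (hclause i).mp hj
      exact (hall i).ne_empty this
    calc S.card ≤ Z.card := Finset.card_le_card hSZ
      _ = k := hZcard

theorem stmt_8 (ℓ m k : ℕ) (hk : 1 ≤ k)
    (D : Fin ℓ → Finset (Fin m)) (hD : ∀ i, (D i).Nonempty)
    (M : Fin (ℓ + k) → Fin m → ℕ)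
    (hMzero : ∀ (r : Fin (ℓ + k)) (j : Fin m),
      ((r : ℕ) < k - 1 ∨ (r : ℕ) = ℓ + k - 1) → M r j = 0)
    (hMclause : ∀ (i : Fin ℓ) (j : Fin m),
      M ⟨k - 1 + (i : ℕ), by have := i.isLt; omega⟩ j = if j ∈ D i then 1 else 0)
    (C : Finset (Fin m)) :
    (rankOf (fun r => ∑ j ∈ C, M r j) ⟨ℓ + k - 1, by omega⟩ ≤ k
        ↔ ∀ i : Fin ℓ, (C ∩ D i).Nonempty) ∧
    (rankOf (fun r => C.sup (fun j => M r j)) ⟨ℓ + k - 1, by omega⟩ ≤ k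
        ↔ ∀ i : Fin ℓ, (C ∩ D i).Nonempty) ∧
    (rankOf (fun r => (C.sort (· ≤ ·)).map (fun j => M r j)) ⟨ℓ + k - 1, by omega⟩ ≤ k
        ↔ ∀ i : Fin ℓ, (C ∩ D i).Nonempty) := by
  have hinter : ∀ i : Fin ℓ, ((C ∩ D i) = ∅ ↔ ∀ j ∈ C, (if j ∈ D i then (1:ℕ) else 0) = 0) := by
    intro i
    constructor
    · intro h j hj
      by_contra h'
      have hjD : j ∈ D i := by by_contra h''; simp [h''] at h'
      have : j ∈ C ∩ D i := Finset.mem_inter.mpr ⟨hj, hjD⟩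
      simp [h] at this
    · intro h
      ext j
      simp only [Finset.mem_inter, Finset.notMem_empty, iff_false, not_and]
      intro hj hjD
      have := h j hj
      simp [hjD] at this
  refine ⟨?_, ?_, ?_⟩
  · apply rank_aux ℓ m k hk D C _ ?_ ?_ ?_
    · intro r
      have : (∑ j ∈ C, M ⟨ℓ + k - 1, by omega⟩ j) = 0 :=
        Finset.sum_eq_zero fun j _ => hMzero _ j (Or.inr rfl)
      simp [this]
    · intro r hr
      have h1 : (∑ j ∈ C, M r j) = 0 := Finset.sum_eq_zero fun j _ => hMzero r j (Or.inl hr)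
      have h2 : (∑ j ∈ C, M ⟨ℓ + k - 1, by omega⟩ j) = 0 :=
        Finset.sum_eq_zero fun j _ => hMzero _ j (Or.inr rfl)
      simp [h1, h2]
    · intro i
      have h2 : (∑ j ∈ C, M ⟨ℓ + k - 1, by omega⟩ j) = 0 :=
        Finset.sum_eq_zero fun j _ => hMzero _ j (Or.inr rfl)
      rw [h2, Finset.sum_eq_zero_iff, hinter i]
      constructor
      · intro h j hj; rw [← hMclause i j]; exact h j hj
      · intro h j hj; rw [hMclause i j]; exact h j hj
  · apply rank_aux ℓ m k hk D C _ ?_ ?_ ?_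
    · intro r
      have : C.sup (fun j => M ⟨ℓ + k - 1, by omega⟩ j) = 0 := by
        rw [nat_sup_eq_zero]
        exact fun j _ => hMzero _ j (Or.inr rfl)
      simp [this]
    · intro r hr
      have h1 : C.sup (fun j => M r j) = 0 := by
        rw [nat_sup_eq_zero]
        exact fun j _ => hMzero r j (Or.inl hr)
      have h2 : C.sup (fun j => M ⟨ℓ + k - 1, by omega⟩ j) = 0 := by
        rw [nat_sup_eq_zero]
        exact fun j _ => hMzero _ j (Or.inr rfl)
      simp [h1, h2]
    · intro i
      have h2 : C.sup (fun j => M ⟨ℓ + k - 1, by omega⟩ j) = 0 := by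
        rw [nat_sup_eq_zero]
        exact fun j _ => hMzero _ j (Or.inr rfl)
      rw [h2, nat_sup_eq_zero, hinter i]
      constructor
      · intro h j hj; rw [← hMclause i j]; exact h j hj
      · intro h j hj; rw [hMclause i j]; exact h j hj
  · have hlast0 : ∀ x ∈ (C.sort (· ≤ ·)).map (fun j => M ⟨ℓ + k - 1, by omega⟩ j), x = 0 := by
      intro x hx
      simp only [List.mem_map] at hx
      obtain ⟨j, _, rfl⟩ := hx
      exact hMzero _ j (Or.inr rfl)
    apply rank_aux ℓ m k hk D C _ ?_ ?_ ?_
    · intro r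
      exact zero_le_list hlast0 (by simp)
    · intro r hr
      rw [List.map_eq_map_iff]
      intro j hj
      rw [hMzero r j (Or.inl hr), hMzero _ j (Or.inr rfl)]
    · intro i
      rw [List.map_eq_map_iff]
      have : ∀ j ∈ C.sort (· ≤ ·), M ⟨ℓ + k - 1, by omega⟩ j = 0 := fun j _ =>
        hMzero _ j (Or.inr rfl)
      rw [hinter i]
      constructor
      · intro h j hj
        rw [← hMclause i j, h j (by simp [Finset.mem_sort, hj]), hMzero _ j (Or.inr rfl)]
      · intro h j hj
        rw [hMclause i j, hMzero _ j (Or.inr rfl), h j (by simpa [Finset.mem_sort] using hj)]
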